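/- Let F be a finite field with q = |F| elements, and let n, r be integers with 2 ≤ r ≤ n ≤ q. Set d = ⌊(n − 1)/(r − 1)⌋. Then there exists a Boolean matrix T with q·n rows and q^r columns such that: (1) T is d-disjunct; (2) every row of T has Hamming weight exactly q^(r−1); and (3) every column of T has Hamming weight exactly n. In particular, if q ≥ 3 then the weight q^(r−1) of every row is strictly less than half the number q^r of columns. -/

import Mathlib

set_option linter.unusedSectionVars false

open Finset Polynomial

namespace KS
variable {F : Type*} [Field F] [DecidableEq F] {r : ℕ}

noncomputable def ev (a : Fin r → F) (c : F) : F := ∑ k : Fin r, a k * c ^ (k : ℕ)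

noncomputable def P (a : Fin r → F) : F[X] := ∑ k : Fin r, C (a k) * X ^ (k : ℕ)

lemma eval_P (a : Fin r → F) (c : F) : (P a).eval c = ev a c := by
  simp [P, ev, eval_finset_sum]

lemma coeff_P (a : Fin r → F) (k : Fin r) : (P a).coeff k = a k := by
  rw [P, finset_sum_coeff]
  rw [Finset.sum_eq_single k]
  · simp
  · intro b _ hb
    have h : ((b:ℕ) ≠ (k:ℕ)) := fun h => hb (Fin.ext h)
    simp [coeff_C_mul, coeff_X_pow, h, Ne.symm h]
  · simp

lemma degree_P (a : Fin r → F) : (P a).degree < r := by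
  apply lt_of_le_of_lt (degree_sum_le _ _)
  rcases Nat.eq_zero_or_pos r with h | h
  · subst h; simp
  apply Finset.sup_lt_iff (by exact_mod_cast WithBot.bot_lt_coe r) |>.mpr
  intro k _
  refine lt_of_le_of_lt (degree_C_mul_X_pow_le _ _) ?_
  exact_mod_cast k.isLt

lemma P_sub (a b : Fin r → F) : P a - P b = P (a - b) := by
  simp [P, ← Finset.sum_sub_distrib, sub_mul, map_sub]

lemma agree_le {n : ℕ} (x : Fin n → F) (hx : Function.Injective x)
    {a b : Fin r → F} (hab : a ≠ b) :
    (Finset.univ.filter fun i : Fin n => ev a (x i) = ev b (x i)).card ≤ r - 1 := by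
  set p : F[X] := P a - P b with hp
  have hpne : p ≠ 0 := by
    rw [hp, sub_ne_zero]
    intro h
    apply hab
    funext k
    have := congrArg (fun q => Polynomial.coeff q (k : ℕ)) h
    simpa [coeff_P] using this
  have hdeg : p.natDegree ≤ r - 1 := by
    have h1 : p.degree < r := by rw [hp, P_sub]; exact degree_P _
    have := (natDegree_lt_iff_degree_lt hpne).mpr (by exact_mod_cast h1)
    omega
  calc (Finset.univ.filter fun i : Fin n => ev a (x i) = ev b (x i)).card
      ≤ p.roots.toFinset.card := by
        apply Finset.card_le_card_of_injOn x
        · intro i hi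
          simp only [Finset.mem_coe, Finset.mem_filter, Finset.mem_univ, true_and] at hi ⊢
          rw [Multiset.mem_toFinset, mem_roots hpne]
          simp [IsRoot, hp, eval_P, hi]
        · exact fun i _ j _ h => hx h
    _ ≤ p.roots.card := Multiset.toFinset_card_le _
    _ ≤ p.natDegree := card_roots' p
    _ ≤ r - 1 := hdeg

lemma ev_add (a b : Fin r → F) (c : F) : ev (a + b) c = ev a c + ev b c := by
  simp [ev, add_mul, Finset.sum_add_distrib]

lemma ev_sub (a b : Fin r → F) (c : F) : ev (a - b) c = ev a c - ev b c := by
  simp [ev, sub_mul, Finset.sum_sub_distrib]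

lemma fiber_card [Fintype F] (hr : 1 ≤ r) (c y : F) :
    (Finset.univ.filter fun a : Fin r → F => ev a c = y).card
      = Fintype.card F ^ (r - 1) := by
  have : NeZero r := ⟨by omega⟩
  -- a preimage of any z
  have hpre : ∀ z : F, ev (fun k : Fin r => if k = 0 then z else 0) c = z := by
    intro z
    simp only [ev, ite_mul, zero_mul]
    rw [Finset.sum_ite_eq' Finset.univ (0 : Fin r) (fun k => z * c ^ (k:ℕ))]
    simp
  -- all fibers have the same card as the fiber of 0
  have hsame : ∀ z : F,
      (Finset.univ.filter fun a : Fin r → F => ev a c = z).card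
        = (Finset.univ.filter fun a : Fin r → F => ev a c = 0).card := by
    intro z
    set a₀ : Fin r → F := fun k => if k = 0 then z else 0 with ha₀
    apply Finset.card_bij' (fun a _ => a - a₀) (fun a _ => a + a₀)
    · intro a ha
      simp only [Finset.mem_filter, Finset.mem_univ, true_and] at ha ⊢
      rw [ev_sub, ha, hpre, sub_self]
    · intro a ha
      simp only [Finset.mem_filter, Finset.mem_univ, true_and] at ha ⊢
      rw [ev_add, ha, hpre, zero_add]
    · intro a _; simp
    · intro a _; simp
  have htot : (Finset.univ : Finset (Fin r → F)).card
      = ∑ z : F, (Finset.univ.filter fun a : Fin r → F => ev a c = z).card :=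
    Finset.card_eq_sum_card_fiberwise (fun a _ => Finset.mem_univ _)
  have hcard : Fintype.card F ^ r
      = Fintype.card F * (Finset.univ.filter fun a : Fin r → F => ev a c = 0).card := by
    calc Fintype.card F ^ r = (Finset.univ : Finset (Fin r → F)).card := by
          simp [Fintype.card_fun]
      _ = ∑ z : F, (Finset.univ.filter fun a : Fin r → F => ev a c = z).card := htot
      _ = ∑ _z : F, (Finset.univ.filter fun a : Fin r → F => ev a c = 0).card := by
          exact Finset.sum_congr rfl fun z _ => hsame z
      _ = Fintype.card F * _ := by rw [Finset.sum_const, smul_eq_mul, Finset.card_univ]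
  have hq : 0 < Fintype.card F := Fintype.card_pos
  have : Fintype.card F * Fintype.card F ^ (r - 1) = Fintype.card F ^ r := by
    rw [← pow_succ']
    congr 1
    omega
  rw [hsame y]
  exact (Nat.eq_of_mul_eq_mul_left hq (hcard.symm.trans this.symm))
end KS

/-- A Boolean matrix `T` (rows indexed by `ρ`, columns by `κ`) is `d`-disjunct if for
every column `j₀` and every finite set `S` of `d` columns not containing `j₀`, some row
has a `true` in column `j₀` and `false` in all columns of `S`. -/
def Disjunct {ρ κ : Type*} (T : ρ → κ → Bool) (d : ℕ) : Prop :=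
  ∀ j₀ : κ, ∀ S : Finset κ, S.card = d → j₀ ∉ S →
    ∃ i : ρ, T i j₀ = true ∧ ∀ j ∈ S, T i j = false

/-- Lemma 1: For a finite field `F` with `q` elements and `2 ≤ r ≤ n ≤ q`,
with `d = ⌊(n-1)/(r-1)⌋`, there is a `(q·n) × (q^r)` Boolean matrix that is `d`-disjunct,
whose every row has weight exactly `q^(r-1)` and every column weight exactly `n`;
moreover if `q ≥ 3` then the row weight `q^(r-1)` is less than half the number of
columns `q^r`. -/
theorem exists_disjunct_constant_weight {F : Type*} [Field F] [Fintype F] {n r : ℕ}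
    (hr : 2 ≤ r) (hrn : r ≤ n) (hnq : n ≤ Fintype.card F) :
    ∃ T : Fin (Fintype.card F * n) → Fin (Fintype.card F ^ r) → Bool,
      Disjunct T ((n - 1) / (r - 1)) ∧
      (∀ i, (Finset.univ.filter (fun j => T i j = true)).card = Fintype.card F ^ (r - 1)) ∧
      (∀ j, (Finset.univ.filter (fun i => T i j = true)).card = n) ∧
      (3 ≤ Fintype.card F → 2 * Fintype.card F ^ (r - 1) < Fintype.card F ^ r) := by
  classical
  set q := Fintype.card F with hq
  have hq2 : 2 ≤ q := Fintype.one_lt_card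
  -- injective points
  obtain ⟨x⟩ : Nonempty (Fin n ↪ F) :=
    Function.Embedding.nonempty_iff_card_le.mpr (by simpa using hnq)
  have hx : Function.Injective x := x.injective
  have e1 : Fin (q * n) ≃ F × Fin n := Fintype.equivOfCardEq (by simp [hq])
  have e2 : Fin (q ^ r) ≃ (Fin r → F) := Fintype.equivOfCardEq (by simp [hq])
  refine ⟨fun i j => decide (KS.ev (e2 j) (x (e1 i).2) = (e1 i).1), ?_, ?_, ?_, ?_⟩
  · -- disjunctness
    intro j₀ S hScard hS
    -- bad indices
    set B : Finset (Fin n) := S.biUnion (fun j =>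
      Finset.univ.filter fun i : Fin n => KS.ev (e2 j) (x i) = KS.ev (e2 j₀) (x i)) with hB
    have hBcard : B.card ≤ ((n - 1) / (r - 1)) * (r - 1) := by
      calc B.card ≤ ∑ j ∈ S, (Finset.univ.filter fun i : Fin n =>
            KS.ev (e2 j) (x i) = KS.ev (e2 j₀) (x i)).card := Finset.card_biUnion_le
        _ ≤ ∑ _j ∈ S, (r - 1) := by
            apply Finset.sum_le_sum
            intro j hj
            exact KS.agree_le x hx (fun h => hS (by rwa [e2.injective h] at hj))
        _ = ((n - 1) / (r - 1)) * (r - 1) := by rw [Finset.sum_const, hScard, smul_eq_mul]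
    have hBlt : B.card < n := by
      have h1 : ((n - 1) / (r - 1)) * (r - 1) ≤ n - 1 := Nat.div_mul_le_self _ _
      omega
    obtain ⟨i, hi⟩ : ∃ i : Fin n, i ∉ B := by
      by_contra h
      push_neg at h
      have := Finset.card_le_card (fun i (_ : i ∈ Finset.univ) => h i)
      simp at this
      omega
    refine ⟨e1.symm (KS.ev (e2 j₀) (x i), i), ?_, ?_⟩
    · simp
    · intro j hj
      simp only [Equiv.apply_symm_apply, decide_eq_false_iff_not]
      intro hcon
      exact hi (Finset.mem_biUnion.mpr ⟨j, hj, by simpa using hcon⟩)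
  · -- row weights
    intro i
    have : (Finset.univ.filter fun j : Fin (q ^ r) =>
        (decide (KS.ev (e2 j) (x (e1 i).2) = (e1 i).1)) = true).card
        = (Finset.univ.filter fun a : Fin r → F =>
            KS.ev a (x (e1 i).2) = (e1 i).1).card := by
      apply Finset.card_bij' (fun j _ => e2 j) (fun a _ => e2.symm a) <;>
        simp
    rw [this]
    exact KS.fiber_card (by omega) _ _
  · -- column weights
    intro j
    have key : (Finset.univ.filter fun i : Fin (q * n) =>
        (decide (KS.ev (e2 j) (x (e1 i).2) = (e1 i).1)) = true).card
        = (Finset.univ : Finset (Fin n)).card := by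
      apply Finset.card_bij' (fun i _ => (e1 i).2)
        (fun t _ => e1.symm (KS.ev (e2 j) (x t), t))
      · intro i _; exact Finset.mem_univ _
      · intro t _
        simp
      · intro i hi
        simp only [Finset.mem_filter, decide_eq_true_eq] at hi
        rw [hi.2]
        simp
      · intro t _
        simp
    rw [key]
    simp
  · -- half weight
    intro h3
    have hpow : q ^ r = q * q ^ (r - 1) := by
      rw [← pow_succ']
      congr 1
      omega
    have hpos : 0 < q ^ (r - 1) := Nat.pow_pos (by omega)
    calc 2 * q ^ (r - 1) < 3 * q ^ (r - 1) := by omega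
      _ ≤ q * q ^ (r - 1) := Nat.mul_le_mul_right _ h3
      _ = q ^ r := hpow.symm
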